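/- The sum, as complex subspaces of End_ℂ(H_F), of the commutant of π_F(A_F) and the commutant of J_F π_F(A_F) J_F has complex dimension 210. -/

import Mathlib

open Matrix ComplexConjugate

noncomputable section

/-- The internal Hilbert space of the Standard Model (one generation):
8×4 complex matrices. -/
abbrev HF : Type := Matrix (Fin 8) (Fin 4) ℂ

abbrev M8 : Type := Matrix (Fin 8) (Fin 8) ℂ
abbrev M4 : Type := Matrix (Fin 4) (Fin 4) ℂ
abbrev M3 : Type := Matrix (Fin 3) (Fin 3) ℂ
abbrev M2 : Type := Matrix (Fin 2) (Fin 2) ℂ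

/-- A 2×2 complex matrix is of quaternionic form. -/
def IsQuat (q : M2) : Prop :=
  ∃ α β : ℂ, q 0 0 = α ∧ q 0 1 = β ∧ q 1 0 = -conj β ∧ q 1 1 = conj α

/-- The block-diagonal matrix with diagonal blocks λ, conj λ, q, λ, m
(of sizes 1,1,2,1,3). -/
def Pmat (l : ℂ) (q : M2) (m : M3) : M8 :=
  Matrix.of fun i j =>
    if i = 0 ∧ j = 0 then l
    else if i = 1 ∧ j = 1 then conj l
    else if h : 2 ≤ (i : ℕ) ∧ (i : ℕ) < 4 ∧ 2 ≤ (j : ℕ) ∧ (j : ℕ) < 4 then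
      q ⟨(i : ℕ) - 2, by omega⟩ ⟨(j : ℕ) - 2, by omega⟩
    else if i = 4 ∧ j = 4 then l
    else if h : 5 ≤ (i : ℕ) ∧ 5 ≤ (j : ℕ) then
      m ⟨(i : ℕ) - 5, by have := i.isLt; omega⟩ ⟨(j : ℕ) - 5, by have := j.isLt; omega⟩
    else 0

/-- The operator ξ ↦ A ξ B on H_F. -/
def lrOp (A : M8) (B : M4) : Module.End ℂ HF where
  toFun ξ := A * ξ * B
  map_add' x y := by simp [Matrix.mul_add, Matrix.add_mul]
  map_smul' c x := by simp [Matrix.mul_smul, Matrix.smul_mul]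

/-- Left multiplication by an 8×8 matrix as an operator on H_F. -/
def lmul (A : M8) : Module.End ℂ HF where
  toFun ξ := A * ξ
  map_add' x y := Matrix.mul_add A x y
  map_smul' c x := by simp [Matrix.mul_smul]

/-- The representation π_F of A_F = ℂ ⊕ ℍ ⊕ M₃(ℂ) on H_F. -/
def piF (l : ℂ) (q : M2) (m : M3) : Module.End ℂ HF := lmul (Pmat l q m)

/-- The image π_F(A_F) as a set of operators. -/
def piFSet : Set (Module.End ℂ HF) := { T | ∃ l q m, IsQuat q ∧ T = piF l q m }

/-- The real structure J_F: ξ = [v₁; v₂] ↦ [v₂*; v₁*]. -/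
def JF (ξ : HF) : HF :=
  Matrix.of fun i j =>
    if h : (i : ℕ) < 4 then
      conj (ξ ⟨(j : ℕ) + 4, by have := j.isLt; omega⟩ ⟨(i : ℕ), h⟩)
    else
      conj (ξ ⟨(j : ℕ), by have := j.isLt; omega⟩ ⟨(i : ℕ) - 4, by have := i.isLt; omega⟩)

lemma JF_add (x y : HF) : JF (x + y) = JF x + JF y := by
  funext i j
  by_cases h : (i : ℕ) < 4 <;> simp [JF, h]

lemma JF_smul (c : ℂ) (x : HF) : JF (c • x) = conj c • JF x := by
  funext i j
  by_cases h : (i : ℕ) < 4 <;> simp [JF, h]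

/-- Conjugation T ↦ J_F ∘ T ∘ J_F, a ℂ-linear operator on H_F. -/
def conjByJ (T : Module.End ℂ HF) : Module.End ℂ HF where
  toFun ξ := JF (T (JF ξ))
  map_add' x y := by
    show JF (T (JF (x + y))) = JF (T (JF x)) + JF (T (JF y))
    rw [JF_add, map_add, JF_add]
  map_smul' c x := by
    show JF (T (JF (c • x))) = c • JF (T (JF x))
    rw [JF_smul, _root_.map_smul, JF_smul, Complex.conj_conj]

abbrev E8 (i j : Fin 8) : M8 := Matrix.single i j 1
abbrev E4 (i j : Fin 4) : M4 := Matrix.single i j 1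

def M1mat (Yν Ye YR : ℂ) : M8 :=
  conj Yν • E8 0 2 + conj Ye • E8 1 3 + Yν • E8 2 0 + Ye • E8 3 1
    + conj YR • E8 0 4 + YR • E8 4 0

def M2mat (Yu Yd : ℂ) : M8 :=
  conj Yu • E8 0 2 + conj Yd • E8 1 3 + Yu • E8 2 0 + Yd • E8 3 1

def N1mat (Yν Ye : ℂ) : M4 :=
  conj Yν • E4 0 2 + conj Ye • E4 1 3 + Yν • E4 2 0 + Ye • E4 3 1

def N2mat (Yu Yd : ℂ) : M4 :=
  conj Yu • E4 0 2 + conj Yd • E4 1 3 + Yu • E4 2 0 + Yd • E4 3 1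

/-- The internal Dirac operator D_F (one generation). -/
def DF (Yν Ye Yu Yd YR : ℂ) : Module.End ℂ HF :=
  lrOp (M1mat Yν Ye YR) (E4 0 0) + lrOp (M2mat Yu Yd) (1 - E4 0 0)
    + lrOp (E8 4 4) (N1mat Yν Ye) + lrOp (E8 5 5 + E8 6 6 + E8 7 7) (N2mat Yu Yd)

/-- Generating set of the Clifford algebra: π_F(A_F) ∪ [D_F, π_F(A_F)]. -/
def genSet (Yν Ye Yu Yd YR : ℂ) : Set (Module.End ℂ HF) :=
  piFSet ∪ { T | ∃ l q m, IsQuat q ∧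
    T = DF Yν Ye Yu Yd YR * piF l q m - piF l q m * DF Yν Ye Yu Yd YR }

/-- The Clifford algebra Cl_{D_F}(A_F). -/
def ClDF (Yν Ye Yu Yd YR : ℂ) : Subalgebra ℂ (Module.End ℂ HF) :=
  Algebra.adjoin ℂ (genSet Yν Ye Yu Yd YR)

/-- Grading χ_F. -/
def G1 : M8 := Matrix.diagonal ![1, 1, -1, -1, 0, 0, 0, 0]
def G2 : M8 := Matrix.diagonal ![0, 0, 0, 0, -1, -1, -1, -1]
def G3 : M4 := Matrix.diagonal ![1, 1, -1, -1]

def chiF : Module.End ℂ HF := lmul G1 + lrOp G2 G3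

/-- The block-diagonal 8×8 matrix diag(a, λ, m) with blocks of sizes 4, 1, 3. -/
def diagALM (a : M4) (l : ℂ) (m : M3) : M8 :=
  Matrix.of fun i j =>
    if h : (i : ℕ) < 4 ∧ (j : ℕ) < 4 then a ⟨(i : ℕ), h.1⟩ ⟨(j : ℕ), h.2⟩
    else if i = 4 ∧ j = 4 then l
    else if h : 5 ≤ (i : ℕ) ∧ 5 ≤ (j : ℕ) then
      m ⟨(i : ℕ) - 5, by have := i.isLt; omega⟩ ⟨(j : ℕ) - 5, by have := j.isLt; omega⟩
    else 0

/-- The operator ξ ↦ diag(a,λ,m) ξ e₁₁ + diag(b,λ,m) ξ (1₄ − e₁₁). -/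
def Bop (a b : M4) (l : ℂ) (m : M3) : Module.End ℂ HF :=
  lrOp (diagALM a l m) (E4 0 0) + lrOp (diagALM b l m) (1 - E4 0 0)

/-- The algebra B of Lemma (B), as a set of operators. -/
def BSet : Set (Module.End ℂ HF) := { T | ∃ a b l m, T = Bop a b l m }

/-- The commutant C_F of P(A_F) in M₈(ℂ), as a set. -/
def CFSet : Set M8 := { X | ∃ q11 q12 q21 q22 α β δ : ℂ,
  X = q11 • E8 0 0 + q12 • E8 0 4 + q21 • E8 4 0 + q22 • E8 4 4
    + α • E8 1 1 + β • (E8 2 2 + E8 3 3) + δ • (E8 5 5 + E8 6 6 + E8 7 7) }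

/-- The block-diagonal 4×4 matrix diag(λ, m). -/
def diagLM (l : ℂ) (m : M3) : M4 :=
  Matrix.of fun i j =>
    if i = 0 ∧ j = 0 then l
    else if h : 1 ≤ (i : ℕ) ∧ 1 ≤ (j : ℕ) then
      m ⟨(i : ℕ) - 1, by have := i.isLt; omega⟩ ⟨(j : ℕ) - 1, by have := j.isLt; omega⟩
    else 0

/-- The block-diagonal 4×4 matrix diag(λ, conj λ, q). -/
def diagLLQ (l : ℂ) (q : M2) : M4 :=
  Matrix.of fun i j =>
    if i = 0 ∧ j = 0 then l
    else if i = 1 ∧ j = 1 then conj l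
    else if h : 2 ≤ (i : ℕ) ∧ 2 ≤ (j : ℕ) then
      q ⟨(i : ℕ) - 2, by have := i.isLt; omega⟩ ⟨(j : ℕ) - 2, by have := j.isLt; omega⟩
    else 0

/-- E_u = diag(1₄, 0₄) ∈ M₈(ℂ). -/
def Eu : M8 := Matrix.of fun i j => if i = j ∧ (i : ℕ) < 4 then 1 else 0

/-- E_l = diag(0₄, 1₄) ∈ M₈(ℂ). -/
def El : M8 := Matrix.of fun i j => if i = j ∧ 4 ≤ (i : ℕ) then 1 else 0

/-- The block-diagonal 8×8 matrix diag(b, c) with two 4×4 blocks. -/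
def diag44 (b c : M4) : M8 :=
  Matrix.of fun i j =>
    if h : (i : ℕ) < 4 ∧ (j : ℕ) < 4 then b ⟨(i : ℕ), h.1⟩ ⟨(j : ℕ), h.2⟩
    else if h : 4 ≤ (i : ℕ) ∧ 4 ≤ (j : ℕ) then
      c ⟨(i : ℕ) - 4, by have := i.isLt; omega⟩ ⟨(j : ℕ) - 4, by have := j.isLt; omega⟩
    else 0


namespace SMaux

@[simp] lemma lrOp_apply (A : M8) (B : M4) (ξ : HF) : lrOp A B ξ = A * ξ * B := rfl
@[simp] lemma lmul_apply (A : M8) (ξ : HF) : lmul A ξ = A * ξ := rfl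

lemma JF_JF (ξ : HF) : JF (JF ξ) = ξ := by
  funext i j
  by_cases h : (i : ℕ) < 4
  · have h4 : ¬ ((j : ℕ) + 4 < 4) := by omega
    simp only [JF, Matrix.of_apply, h, dif_pos, h4, dif_neg, not_false_iff]
    rw [Complex.conj_conj]
    congr 1 <;> exact Fin.ext (by simp)
  · have h4 : ((j : ℕ) : ℕ) < 4 := j.isLt
    simp only [JF, Matrix.of_apply, h, dif_neg, not_false_iff, h4, dif_pos]
    rw [Complex.conj_conj]
    congr 1
    exact Fin.ext (by simp; omega)

lemma conjByJ_conjByJ (T : Module.End ℂ HF) : conjByJ (conjByJ T) = T := by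
  refine LinearMap.ext fun ξ => ?_
  show JF (JF (T (JF (JF ξ)))) = T ξ
  rw [JF_JF, JF_JF]

lemma conjByJ_mul (S T : Module.End ℂ HF) :
    conjByJ (S * T) = conjByJ S * conjByJ T := by
  refine LinearMap.ext fun ξ => ?_
  show JF (S (T (JF ξ))) = JF (S (JF (JF (T (JF ξ)))))
  rw [JF_JF]


/-- Embedding of `Fin 4` into the upper half of `Fin 8`. -/
def uE (r : Fin 4) : Fin 8 := ⟨(r : ℕ), by omega⟩
/-- Embedding of `Fin 4` into the lower half of `Fin 8`. -/
def lE (r : Fin 4) : Fin 8 := ⟨(r : ℕ) + 4, by omega⟩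

@[simp] lemma uE_val (r : Fin 4) : ((uE r : Fin 8) : ℕ) = (r : ℕ) := rfl
@[simp] lemma lE_val (r : Fin 4) : ((lE r : Fin 8) : ℕ) = (r : ℕ) + 4 := rfl

@[simp] lemma uE_inj {x y : Fin 4} : uE x = uE y ↔ x = y := by
  simp [Fin.ext_iff, uE]
@[simp] lemma lE_inj {x y : Fin 4} : lE x = lE y ↔ x = y := by
  simp [Fin.ext_iff, lE]
@[simp] lemma uE_ne_lE {x y : Fin 4} : uE x = lE y ↔ False := by
  simp only [Fin.ext_iff, uE, lE, iff_false]; omega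
@[simp] lemma lE_ne_uE {x y : Fin 4} : lE x = uE y ↔ False := by
  simp only [Fin.ext_iff, uE, lE, iff_false]; omega

lemma triple_apply (r s : Fin 8) (d c : Fin 4) (η : HF) (a : Fin 8) (b : Fin 4) :
    (E8 r s * η * E4 d c) a b = if a = r ∧ b = c then η s d else 0 := by
  rw [Matrix.mul_apply]
  by_cases ha : a = r
  · subst ha
    by_cases hb : b = c
    · subst hb
      simp [Matrix.mul_apply, Matrix.single, Matrix.of_apply, ite_and,
        Finset.sum_ite_eq, Finset.sum_ite_eq']
    · simp [Matrix.single, Matrix.of_apply, ite_and, Ne.symm hb, hb]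
  · simp [Matrix.single, Matrix.of_apply, ite_and, Ne.symm ha, ha,
      Matrix.mul_apply]

lemma JF_apply_lt (ξ : HF) (i : Fin 8) (j : Fin 4) (h : (i : ℕ) < 4) :
    JF ξ i j = conj (ξ (lE j) ⟨(i : ℕ), h⟩) := by
  simp [JF, lE, Matrix.of_apply, h]
lemma JF_apply_ge (ξ : HF) (i : Fin 8) (j : Fin 4) (h : ¬ ((i : ℕ) < 4)) :
    JF ξ i j = conj (ξ (uE j) ⟨(i : ℕ) - 4, by have := i.isLt; omega⟩) := by
  simp [JF, uE, Matrix.of_apply, h]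

@[simp] lemma JF_uE (ξ : HF) (x : Fin 4) (j : Fin 4) :
    JF ξ (uE x) j = conj (ξ (lE j) x) := by
  rw [JF_apply_lt ξ (uE x) j x.isLt]; rfl
@[simp] lemma JF_lE (ξ : HF) (x : Fin 4) (j : Fin 4) :
    JF ξ (lE x) j = conj (ξ (uE j) x) := by
  rw [JF_apply_ge ξ (lE x) j (by simp)]
  congr 2


lemma ne_lE_of_lt {i : Fin 8} (h : (i : ℕ) < 4) (c : Fin 4) : i ≠ lE c := by
  intro e; rw [e] at h; simp at h
lemma ne_uE_of_ge {i : Fin 8} (h : ¬ ((i : ℕ) < 4)) (c : Fin 4) : i ≠ uE c := by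
  intro e; rw [e] at h; exact h (by simpa using c.isLt)
lemma mk_eq_iff_uE {i : Fin 8} {h : (i : ℕ) < 4} {c : Fin 4} :
    (⟨(i : ℕ), h⟩ : Fin 4) = c ↔ i = uE c := by
  simp [Fin.ext_iff, uE]
lemma mk_eq_iff_lE {i : Fin 8} (h : ¬ ((i : ℕ) < 4)) {h' : (i : ℕ) - 4 < 4} {c : Fin 4} :
    (⟨(i : ℕ) - 4, h'⟩ : Fin 4) = c ↔ i = lE c := by
  simp only [Fin.ext_iff, lE]; omega

lemma conj_lrOp_uu (r s d c : Fin 4) :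
    conjByJ (lrOp (E8 (uE r) (uE s)) (E4 d c)) = lrOp (E8 (lE c) (lE d)) (E4 s r) := by
  refine LinearMap.ext fun ξ => ?_
  funext i j
  show JF (E8 (uE r) (uE s) * JF ξ * E4 d c) i j = (E8 (lE c) (lE d) * ξ * E4 s r) i j
  rw [triple_apply]
  by_cases h : (i : ℕ) < 4
  · rw [JF_apply_lt _ i j h, triple_apply]
    simp [(ne_lE_of_lt h c)]
  · rw [JF_apply_ge _ i j h, triple_apply]
    simp only [mk_eq_iff_lE h]
    by_cases hc : i = lE c ∧ j = r
    · simp [hc.1, hc.2]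
    · rw [if_neg hc, if_neg (by rw [uE_inj]; intro hn; exact hc ⟨hn.2, Fin.ext (by
        simpa [Fin.ext_iff] using hn.1)⟩), map_zero]

lemma conj_lrOp_ll (r s d c : Fin 4) :
    conjByJ (lrOp (E8 (lE r) (lE s)) (E4 d c)) = lrOp (E8 (uE c) (uE d)) (E4 s r) := by
  refine LinearMap.ext fun ξ => ?_
  funext i j
  show JF (E8 (lE r) (lE s) * JF ξ * E4 d c) i j = (E8 (uE c) (uE d) * ξ * E4 s r) i j
  rw [triple_apply]
  by_cases h : (i : ℕ) < 4
  · rw [JF_apply_lt _ i j h, triple_apply]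
    simp only [mk_eq_iff_uE]
    by_cases hc : i = uE c ∧ j = r
    · simp [hc.1, hc.2]
    · rw [if_neg hc, if_neg (by rw [lE_inj]; intro hn; exact hc ⟨hn.2, hn.1⟩), map_zero]
  · rw [JF_apply_ge _ i j h, triple_apply]
    simp [(ne_uE_of_ge h c)]

lemma conj_lrOp_ul (r s d c : Fin 4) :
    conjByJ (lrOp (E8 (uE r) (lE s)) (E4 d c)) = lrOp (E8 (lE c) (uE d)) (E4 s r) := by
  refine LinearMap.ext fun ξ => ?_
  funext i j
  show JF (E8 (uE r) (lE s) * JF ξ * E4 d c) i j = (E8 (lE c) (uE d) * ξ * E4 s r) i j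
  rw [triple_apply]
  by_cases h : (i : ℕ) < 4
  · rw [JF_apply_lt _ i j h, triple_apply]
    simp [(ne_lE_of_lt h c)]
  · rw [JF_apply_ge _ i j h, triple_apply]
    simp only [mk_eq_iff_lE h]
    by_cases hc : i = lE c ∧ j = r
    · simp [hc.1, hc.2]
    · rw [if_neg hc, if_neg (by rw [uE_inj]; intro hn; exact hc ⟨hn.2, Fin.ext (by
        simpa [Fin.ext_iff] using hn.1)⟩), map_zero]

lemma conj_lrOp_lu (r s d c : Fin 4) :
    conjByJ (lrOp (E8 (lE r) (uE s)) (E4 d c)) = lrOp (E8 (uE c) (lE d)) (E4 s r) := by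
  refine LinearMap.ext fun ξ => ?_
  funext i j
  show JF (E8 (lE r) (uE s) * JF ξ * E4 d c) i j = (E8 (uE c) (lE d) * ξ * E4 s r) i j
  rw [triple_apply]
  by_cases h : (i : ℕ) < 4
  · rw [JF_apply_lt _ i j h, triple_apply]
    simp only [mk_eq_iff_uE]
    by_cases hc : i = uE c ∧ j = r
    · simp [hc.1, hc.2]
    · rw [if_neg hc, if_neg (by rw [lE_inj]; intro hn; exact hc ⟨hn.2, hn.1⟩), map_zero]
  · rw [JF_apply_ge _ i j h, triple_apply]
    simp [(ne_uE_of_ge h c)]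


lemma lrOp_add_left (A B : M8) (R : M4) : lrOp (A + B) R = lrOp A R + lrOp B R := by
  refine LinearMap.ext fun ξ => ?_
  show (A + B) * ξ * R = A * ξ * R + B * ξ * R
  rw [Matrix.add_mul, Matrix.add_mul]
lemma lrOp_add_right (A : M8) (R S : M4) : lrOp A (R + S) = lrOp A R + lrOp A S := by
  refine LinearMap.ext fun ξ => ?_
  show A * ξ * (R + S) = A * ξ * R + A * ξ * S
  rw [Matrix.mul_add]
lemma conjByJ_add (S T : Module.End ℂ HF) : conjByJ (S + T) = conjByJ S + conjByJ T := by
  refine LinearMap.ext fun ξ => ?_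
  show JF ((S + T) (JF ξ)) = JF (S (JF ξ)) + JF (T (JF ξ))
  rw [LinearMap.add_apply, JF_add]
lemma conjByJ_smul (c : ℂ) (T : Module.End ℂ HF) :
    conjByJ (c • T) = conj c • conjByJ T := by
  refine LinearMap.ext fun ξ => ?_
  show JF ((c • T) (JF ξ)) = conj c • JF (T (JF ξ))
  rw [LinearMap.smul_apply, JF_smul]

/-- The seven basis matrices of the commutant `C_F`. -/
def Cm : Fin 7 → M8 :=
  ![E8 (uE 0) (uE 0), E8 (uE 0) (lE 0), E8 (lE 0) (uE 0), E8 (lE 0) (lE 0),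
    E8 (uE 1) (uE 1), E8 (uE 2) (uE 2) + E8 (uE 3) (uE 3),
    E8 (lE 1) (lE 1) + E8 (lE 2) (lE 2) + E8 (lE 3) (lE 3)]
def R2 : Fin 2 → M4 := ![E4 0 0, E4 1 1 + E4 2 2 + E4 3 3]
def R3 : Fin 3 → M4 := ![E4 0 0, E4 1 1, E4 2 2 + E4 3 3]
def cr2 : Fin 2 → Fin 4 := ![0, 1]
def cr3 : Fin 3 → Fin 4 := ![0, 1, 2]
def arF : Fin 7 → Fin 8 := ![uE 0, uE 0, lE 0, lE 0, uE 1, uE 3, lE 3]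
def brF : Fin 7 → Fin 8 := ![uE 0, lE 0, uE 0, lE 0, uE 1, uE 3, lE 3]

abbrev K1 := {p : Fin 4 × Fin 4 // p ≠ (0,0) ∧ p ≠ (1,1) ∧ p ≠ (3,3)}
abbrev K2 := {p : Fin 4 × Fin 4 // p ≠ (0,0) ∧ p ≠ (3,3)}
abbrev K3 := {p : Fin 4 × Fin 4 // p ≠ (0,0)}
abbrev ιT := (Fin 7 × Fin 4 × Fin 4) ⊕ ((K1 × Fin 2) ⊕ ((K2 × Fin 3) ⊕ (K3 ⊕ K3)))

set_option maxRecDepth 10000 in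
lemma card_ιT : Fintype.card ιT = 210 := by decide

/-- The spanning family of `U ⊔ V`. -/
def vF : ιT → Module.End ℂ HF
  | .inl (k, d, c) => lrOp (Cm k) (E4 d c)
  | .inr (.inl (p, r)) => lrOp (E8 (uE p.1.1) (uE p.1.2)) (R2 r)
  | .inr (.inr (.inl (p, r))) => lrOp (E8 (lE p.1.1) (lE p.1.2)) (R3 r)
  | .inr (.inr (.inr (.inl p))) => lrOp (E8 (uE p.1.1) (lE p.1.2)) (E4 0 0)
  | .inr (.inr (.inr (.inr p))) => lrOp (E8 (lE p.1.1) (uE p.1.2)) (E4 0 0)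

/-- Coordinate functionals on `End ℂ HF`. -/
def φF (a b : Fin 8) (c d : Fin 4) : Module.End ℂ HF →ₗ[ℂ] ℂ where
  toFun T := T (Matrix.single b d (1 : ℂ)) a c
  map_add' x y := rfl
  map_smul' r x := rfl

lemma middle_apply (L : M8) (R : M4) (a b : Fin 8) (c d : Fin 4) :
    (L * Matrix.single b d (1 : ℂ) * R) a c = L a b * R d c := by
  simp [Matrix.mul_apply, Matrix.single, Matrix.of_apply, ite_and,
    Finset.sum_ite_eq, Finset.sum_ite_eq', mul_comm]

@[simp] lemma φF_lrOp (L : M8) (R : M4) (a b : Fin 8) (c d : Fin 4) :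
    φF a b c d (lrOp L R) = L a b * R d c := middle_apply L R a b c d

/-- The dual family. -/
def fF : ιT → (Module.End ℂ HF →ₗ[ℂ] ℂ)
  | .inl (k, d, c) => φF (arF k) (brF k) c d
  | .inr (.inl (p, r)) => φF (uE p.1.1) (uE p.1.2) (cr2 r) (cr2 r)
      - (if p.1.1 = p.1.2 then φF (uE 3) (uE 3) (cr2 r) (cr2 r) else 0)
  | .inr (.inr (.inl (p, r))) => φF (lE p.1.1) (lE p.1.2) (cr3 r) (cr3 r)
      - (if p.1.1 = p.1.2 then φF (lE 3) (lE 3) (cr3 r) (cr3 r) else 0)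
  | .inr (.inr (.inr (.inl p))) => φF (uE p.1.1) (lE p.1.2) 0 0
  | .inr (.inr (.inr (.inr p))) => φF (lE p.1.1) (uE p.1.2) 0 0


lemma E8_apply (a b i j : Fin 8) : E8 a b i j = if a = i ∧ b = j then 1 else 0 := rfl
lemma E4_apply (a b i j : Fin 4) : E4 a b i j = if a = i ∧ b = j then 1 else 0 := rfl

@[simp] lemma arF_0 : arF 0 = uE 0 := rfl
@[simp] lemma arF_1 : arF 1 = uE 0 := rfl
@[simp] lemma arF_2 : arF 2 = lE 0 := rfl
@[simp] lemma arF_3 : arF 3 = lE 0 := rfl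
@[simp] lemma arF_4 : arF 4 = uE 1 := rfl
@[simp] lemma arF_5 : arF 5 = uE 3 := rfl
@[simp] lemma arF_6 : arF 6 = lE 3 := rfl
@[simp] lemma brF_0 : brF 0 = uE 0 := rfl
@[simp] lemma brF_1 : brF 1 = lE 0 := rfl
@[simp] lemma brF_2 : brF 2 = uE 0 := rfl
@[simp] lemma brF_3 : brF 3 = lE 0 := rfl
@[simp] lemma brF_4 : brF 4 = uE 1 := rfl
@[simp] lemma brF_5 : brF 5 = uE 3 := rfl
@[simp] lemma brF_6 : brF 6 = lE 3 := rfl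
@[simp] lemma Cm_0 : Cm 0 = E8 (uE 0) (uE 0) := rfl
@[simp] lemma Cm_1 : Cm 1 = E8 (uE 0) (lE 0) := rfl
@[simp] lemma Cm_2 : Cm 2 = E8 (lE 0) (uE 0) := rfl
@[simp] lemma Cm_3 : Cm 3 = E8 (lE 0) (lE 0) := rfl
@[simp] lemma Cm_4 : Cm 4 = E8 (uE 1) (uE 1) := rfl
@[simp] lemma Cm_5 : Cm 5 = E8 (uE 2) (uE 2) + E8 (uE 3) (uE 3) := rfl
@[simp] lemma Cm_6 : Cm 6 = E8 (lE 1) (lE 1) + E8 (lE 2) (lE 2) + E8 (lE 3) (lE 3) := rfl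
@[simp] lemma R2_0 : R2 0 = E4 0 0 := rfl
@[simp] lemma R2_1 : R2 1 = E4 1 1 + E4 2 2 + E4 3 3 := rfl
@[simp] lemma R3_0 : R3 0 = E4 0 0 := rfl
@[simp] lemma R3_1 : R3 1 = E4 1 1 := rfl
@[simp] lemma R3_2 : R3 2 = E4 2 2 + E4 3 3 := rfl
@[simp] lemma cr2_0 : cr2 0 = 0 := rfl
@[simp] lemma cr2_1 : cr2 1 = 1 := rfl
@[simp] lemma cr3_0 : cr3 0 = 0 := rfl
@[simp] lemma cr3_1 : cr3 1 = 1 := rfl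
@[simp] lemma cr3_2 : cr3 2 = 2 := rfl

lemma E8_apply' (a b i j : Fin 8) : E8 a b i j = if i = a ∧ j = b then 1 else 0 := by
  rw [E8_apply]; exact if_congr (and_congr eq_comm eq_comm) rfl rfl
lemma E4_apply' (a b i j : Fin 4) : E4 a b i j = if i = a ∧ j = b then 1 else 0 := by
  rw [E4_apply]; exact if_congr (and_congr eq_comm eq_comm) rfl rfl

lemma K_ne' {x y a b : Fin 4} (h : ((x, y) : Fin 4 × Fin 4) ≠ (a, b)) : ¬ (a = x ∧ b = y) :=
  fun he => h (by simp [he.1.symm, he.2.symm])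

lemma K_ne {x y a b : Fin 4} (h : ((x, y) : Fin 4 × Fin 4) ≠ (a, b)) : ¬ (x = a ∧ y = b) :=
  fun he => h (by simp [he.1, he.2])

lemma Cm_pivot (k k' : Fin 7) : Cm k' (arF k) (brF k) = if k = k' then 1 else 0 := by
  fin_cases k <;> fin_cases k' <;>
    simp [E8_apply, Matrix.add_apply]


lemma E8uu_arF (k : Fin 7) {x y : Fin 4} (h00 : ¬ (x = 0 ∧ y = 0)) (h11 : ¬ (x = 1 ∧ y = 1))
    (h33 : ¬ (x = 3 ∧ y = 3)) : E8 (uE x) (uE y) (arF k) (brF k) = 0 := by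
  fin_cases k <;> simp [E8_apply, h00, h11, h33]
lemma E8ll_arF (k : Fin 7) {x y : Fin 4} (h00 : ¬ (x = 0 ∧ y = 0))
    (h33 : ¬ (x = 3 ∧ y = 3)) : E8 (lE x) (lE y) (arF k) (brF k) = 0 := by
  fin_cases k <;> simp [E8_apply, h00, h33]
lemma E8ul_arF (k : Fin 7) {x y : Fin 4} (h00 : ¬ (x = 0 ∧ y = 0)) :
    E8 (uE x) (lE y) (arF k) (brF k) = 0 := by
  fin_cases k <;> simp [E8_apply, h00]
lemma E8lu_arF (k : Fin 7) {x y : Fin 4} (h00 : ¬ (x = 0 ∧ y = 0)) :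
    E8 (lE x) (uE y) (arF k) (brF k) = 0 := by
  fin_cases k <;> simp [E8_apply, h00]

set_option maxHeartbeats 1000000 in
lemma fF_vF (i j : ιT) : fF i (vF j) = if i = j then 1 else 0 := by
  rcases i with ⟨k, d, c⟩ | ⟨⟨⟨x, y⟩, hp⟩, r⟩ | ⟨⟨⟨x, y⟩, hp⟩, r⟩ | ⟨⟨x, y⟩, hp⟩ | ⟨⟨x, y⟩, hp⟩ <;>
    rcases j with ⟨k', d', c'⟩ | ⟨⟨⟨x', y'⟩, hp'⟩, r'⟩ | ⟨⟨⟨x', y'⟩, hp'⟩, r'⟩ | ⟨⟨x', y'⟩, hp'⟩ | ⟨⟨x', y'⟩, hp'⟩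
  -- case (U, U)
  · show φF (arF k) (brF k) c d (lrOp (Cm k') (E4 d' c')) = _
    rw [φF_lrOp, Cm_pivot, E4_apply']
    simp only [Sum.inl.injEq, Prod.mk.injEq]
    by_cases h1 : k = k' <;> by_cases h2 : d = d' <;> by_cases h3 : c = c' <;>
      simp [h1, h2, h3]
  -- case (U, T11)
  · show φF (arF k) (brF k) c d (lrOp (E8 (uE x') (uE y')) (R2 r')) = _
    rw [φF_lrOp, E8uu_arF k (K_ne hp'.1) (K_ne hp'.2.1) (K_ne hp'.2.2)]
    simp
  -- case (U, T22)
  · show φF (arF k) (brF k) c d (lrOp (E8 (lE x') (lE y')) (R3 r')) = _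
    rw [φF_lrOp, E8ll_arF k (K_ne hp'.1) (K_ne hp'.2)]
    simp
  -- case (U, TR)
  · show φF (arF k) (brF k) c d (lrOp (E8 (uE x') (lE y')) (E4 0 0)) = _
    rw [φF_lrOp, E8ul_arF k (K_ne hp')]
    simp
  -- case (U, BL)
  · show φF (arF k) (brF k) c d (lrOp (E8 (lE x') (uE y')) (E4 0 0)) = _
    rw [φF_lrOp, E8lu_arF k (K_ne hp')]
    simp
  -- case (T11, U)
  · show (φF (uE x) (uE y) (cr2 r) (cr2 r)
      - (if x = y then φF (uE 3) (uE 3) (cr2 r) (cr2 r) else 0)) (lrOp (Cm k') (E4 d' c')) = _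
    rw [LinearMap.sub_apply]
    by_cases hxy : x = y
    · have hx2 : x = 2 := by
        subst hxy
        fin_cases x <;> first | rfl | (exfalso; revert hp; simp)
      subst hxy; subst hx2
      rw [if_pos rfl, φF_lrOp, φF_lrOp]
      fin_cases k' <;> simp [E8_apply', Matrix.add_apply, sub_mul]
    · rw [if_neg hxy, LinearMap.zero_apply, φF_lrOp, sub_zero]
      have hd : ∀ a : Fin 4, ¬ (a = x ∧ a = y) := fun a ⟨h1, h2⟩ => hxy (h1.symm.trans h2)
      fin_cases k' <;> simp [E8_apply', Matrix.add_apply, hd]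
  -- case (T11, T11)
  · show (φF (uE x) (uE y) (cr2 r) (cr2 r)
      - (if x = y then φF (uE 3) (uE 3) (cr2 r) (cr2 r) else 0)) (lrOp (E8 (uE x') (uE y')) (R2 r')) = _
    rw [LinearMap.sub_apply]
    have h33 : ¬ ((3 : Fin 4) = x' ∧ (3 : Fin 4) = y') := K_ne' hp'.2.2
    have hsub : (if x = y then φF (uE 3) (uE 3) (cr2 r) (cr2 r) else 0) (lrOp (E8 (uE x') (uE y')) (R2 r')) = 0 := by
      by_cases hxy : x = y
      · rw [if_pos hxy, φF_lrOp, E8_apply']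
        simp [h33]
      · rw [if_neg hxy, LinearMap.zero_apply]
    rw [hsub, sub_zero, φF_lrOp, E8_apply']
    simp only [Sum.inr.injEq, Sum.inl.injEq, Prod.mk.injEq, Subtype.mk.injEq, uE_inj]
    by_cases h1 : x = x' <;> by_cases h2 : y = y' <;> fin_cases r <;> fin_cases r' <;>
      simp [h1, h2, E4_apply, Matrix.add_apply]
  -- case (T11, T22)
  · show (φF (uE x) (uE y) (cr2 r) (cr2 r)
      - (if x = y then φF (uE 3) (uE 3) (cr2 r) (cr2 r) else 0)) (lrOp (E8 (lE x') (lE y')) (R3 r')) = _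
    rw [LinearMap.sub_apply]
    by_cases hxy : x = y <;>
      simp [hxy, φF_lrOp, E8_apply]
  -- case (T11, TR)
  · show (φF (uE x) (uE y) (cr2 r) (cr2 r)
      - (if x = y then φF (uE 3) (uE 3) (cr2 r) (cr2 r) else 0)) (lrOp (E8 (uE x') (lE y')) (E4 0 0)) = _
    rw [LinearMap.sub_apply]
    by_cases hxy : x = y <;>
      simp [hxy, φF_lrOp, E8_apply]
  -- case (T11, BL)
  · show (φF (uE x) (uE y) (cr2 r) (cr2 r)
      - (if x = y then φF (uE 3) (uE 3) (cr2 r) (cr2 r) else 0)) (lrOp (E8 (lE x') (uE y')) (E4 0 0)) = _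
    rw [LinearMap.sub_apply]
    by_cases hxy : x = y <;>
      simp [hxy, φF_lrOp, E8_apply]
  -- case (T22, U)
  · show (φF (lE x) (lE y) (cr3 r) (cr3 r)
      - (if x = y then φF (lE 3) (lE 3) (cr3 r) (cr3 r) else 0)) (lrOp (Cm k') (E4 d' c')) = _
    rw [LinearMap.sub_apply]
    by_cases hxy : x = y
    · have hx2 : x = 1 ∨ x = 2 := by
        subst hxy
        fin_cases x <;> first | (left; rfl) | (right; rfl) | (exfalso; revert hp; simp)
      subst hxy
      rw [if_pos rfl, φF_lrOp, φF_lrOp]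
      rcases hx2 with h | h <;> subst h <;>
        fin_cases k' <;> simp [E8_apply', Matrix.add_apply, sub_mul]
    · rw [if_neg hxy, LinearMap.zero_apply, φF_lrOp, sub_zero]
      have hd : ∀ a : Fin 4, ¬ (a = x ∧ a = y) := fun a ⟨h1, h2⟩ => hxy (h1.symm.trans h2)
      fin_cases k' <;> simp [E8_apply', Matrix.add_apply, hd]
  -- case (T22, T11)
  · show (φF (lE x) (lE y) (cr3 r) (cr3 r)
      - (if x = y then φF (lE 3) (lE 3) (cr3 r) (cr3 r) else 0)) (lrOp (E8 (uE x') (uE y')) (R2 r')) = _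
    rw [LinearMap.sub_apply]
    by_cases hxy : x = y <;>
      simp [hxy, φF_lrOp, E8_apply]
  -- case (T22, T22)
  · show (φF (lE x) (lE y) (cr3 r) (cr3 r)
      - (if x = y then φF (lE 3) (lE 3) (cr3 r) (cr3 r) else 0)) (lrOp (E8 (lE x') (lE y')) (R3 r')) = _
    rw [LinearMap.sub_apply]
    have h33 : ¬ ((3 : Fin 4) = x' ∧ (3 : Fin 4) = y') := K_ne' hp'.2
    have hsub : (if x = y then φF (lE 3) (lE 3) (cr3 r) (cr3 r) else 0) (lrOp (E8 (lE x') (lE y')) (R3 r')) = 0 := by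
      by_cases hxy : x = y
      · rw [if_pos hxy, φF_lrOp, E8_apply']
        simp [h33]
      · rw [if_neg hxy, LinearMap.zero_apply]
    rw [hsub, sub_zero, φF_lrOp, E8_apply']
    simp only [Sum.inr.injEq, Sum.inl.injEq, Prod.mk.injEq, Subtype.mk.injEq, lE_inj]
    by_cases h1 : x = x' <;> by_cases h2 : y = y' <;> fin_cases r <;> fin_cases r' <;>
      simp [h1, h2, E4_apply, Matrix.add_apply]
  -- case (T22, TR)
  · show (φF (lE x) (lE y) (cr3 r) (cr3 r)
      - (if x = y then φF (lE 3) (lE 3) (cr3 r) (cr3 r) else 0)) (lrOp (E8 (uE x') (lE y')) (E4 0 0)) = _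
    rw [LinearMap.sub_apply]
    by_cases hxy : x = y <;>
      simp [hxy, φF_lrOp, E8_apply]
  -- case (T22, BL)
  · show (φF (lE x) (lE y) (cr3 r) (cr3 r)
      - (if x = y then φF (lE 3) (lE 3) (cr3 r) (cr3 r) else 0)) (lrOp (E8 (lE x') (uE y')) (E4 0 0)) = _
    rw [LinearMap.sub_apply]
    by_cases hxy : x = y <;>
      simp [hxy, φF_lrOp, E8_apply]
  -- case (TR, U)
  · show φF (uE x) (lE y) 0 0 (lrOp (Cm k') (E4 d' c')) = _
    rw [φF_lrOp]
    have h00 : ¬ ((0 : Fin 4) = x ∧ (0 : Fin 4) = y) := K_ne' hp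
    fin_cases k' <;> simp [E8_apply', Matrix.add_apply, h00]
  -- case (TR, T11)
  · show φF (uE x) (lE y) 0 0 (lrOp (E8 (uE x') (uE y')) (R2 r')) = _
    rw [φF_lrOp, E8_apply]; simp
  -- case (TR, T22)
  · show φF (uE x) (lE y) 0 0 (lrOp (E8 (lE x') (lE y')) (R3 r')) = _
    rw [φF_lrOp, E8_apply]; simp
  -- case (TR, TR)
  · show φF (uE x) (lE y) 0 0 (lrOp (E8 (uE x') (lE y')) (E4 0 0)) = _
    rw [φF_lrOp, E8_apply']
    simp only [Sum.inr.injEq, Sum.inl.injEq, Prod.mk.injEq, Subtype.mk.injEq, uE_inj, lE_inj]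
    by_cases h1 : x = x' <;> by_cases h2 : y = y' <;>
      simp [h1, h2, E4_apply]
  -- case (TR, BL)
  · show φF (uE x) (lE y) 0 0 (lrOp (E8 (lE x') (uE y')) (E4 0 0)) = _
    rw [φF_lrOp, E8_apply]; simp
  -- case (BL, U)
  · show φF (lE x) (uE y) 0 0 (lrOp (Cm k') (E4 d' c')) = _
    rw [φF_lrOp]
    have h00 : ¬ ((0 : Fin 4) = x ∧ (0 : Fin 4) = y) := K_ne' hp
    fin_cases k' <;> simp [E8_apply', Matrix.add_apply, h00]
  -- case (BL, T11)
  · show φF (lE x) (uE y) 0 0 (lrOp (E8 (uE x') (uE y')) (R2 r')) = _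
    rw [φF_lrOp, E8_apply]; simp
  -- case (BL, T22)
  · show φF (lE x) (uE y) 0 0 (lrOp (E8 (lE x') (lE y')) (R3 r')) = _
    rw [φF_lrOp, E8_apply]; simp
  -- case (BL, TR)
  · show φF (lE x) (uE y) 0 0 (lrOp (E8 (uE x') (lE y')) (E4 0 0)) = _
    rw [φF_lrOp, E8_apply]; simp
  -- case (BL, BL)
  · show φF (lE x) (uE y) 0 0 (lrOp (E8 (lE x') (uE y')) (E4 0 0)) = _
    rw [φF_lrOp, E8_apply']
    simp only [Sum.inr.injEq, Sum.inl.injEq, Prod.mk.injEq, Subtype.mk.injEq, uE_inj, lE_inj]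
    by_cases h1 : x = x' <;> by_cases h2 : y = y' <;>
      simp [h1, h2, E4_apply]

lemma fF_vF_same (i : ιT) : fF i (vF i) = 1 := by
  have := fF_vF i i; rwa [if_pos rfl] at this
lemma fF_vF_ne {i j : ιT} (h : i ≠ j) : fF i (vF j) = 0 := by
  have := fF_vF i j; rwa [if_neg h] at this

lemma vF_li : LinearIndependent ℂ vF := by
  rw [linearIndependent_iff']
  intro s g hsum i hi
  have h := congrArg (fF i) hsum
  rw [map_sum, map_zero] at h
  rw [Finset.sum_eq_single_of_mem i hi (fun b _ hb => by
    rw [_root_.map_smul, fF_vF_ne (Ne.symm hb), smul_zero])] at h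
  rwa [_root_.map_smul, fF_vF_same, smul_eq_mul, mul_one] at h

lemma cv80 : (((0 : Fin 8)) : ℕ) = 0 := rfl
lemma cv81 : (((1 : Fin 8)) : ℕ) = 1 := rfl
lemma cv82 : (((2 : Fin 8)) : ℕ) = 2 := rfl
lemma cv83 : (((3 : Fin 8)) : ℕ) = 3 := rfl
lemma cv84 : (((4 : Fin 8)) : ℕ) = 4 := rfl
lemma cv85 : (((5 : Fin 8)) : ℕ) = 5 := rfl
lemma cv86 : (((6 : Fin 8)) : ℕ) = 6 := rfl
lemma cv87 : (((7 : Fin 8)) : ℕ) = 7 := rfl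
lemma fin2mk0 (h : 0 < 2) : (⟨0, h⟩ : Fin 2) = 0 := rfl
lemma fin2mk1 (h : 1 < 2) : (⟨1, h⟩ : Fin 2) = 1 := rfl
lemma fin3mk0 (h : 0 < 3) : (⟨0, h⟩ : Fin 3) = 0 := rfl
lemma fin3mk1 (h : 1 < 3) : (⟨1, h⟩ : Fin 3) = 1 := rfl
lemma fin3mk2 (h : 2 < 3) : (⟨2, h⟩ : Fin 3) = 2 := rfl
lemma fin4mk0 (h : 0 < 4) : (⟨0, h⟩ : Fin 4) = 0 := rfl
lemma fin4mk1 (h : 1 < 4) : (⟨1, h⟩ : Fin 4) = 1 := rfl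
lemma fin4mk2 (h : 2 < 4) : (⟨2, h⟩ : Fin 4) = 2 := rfl
lemma fin4mk3 (h : 3 < 4) : (⟨3, h⟩ : Fin 4) = 3 := rfl

lemma uE0 : uE 0 = (0 : Fin 8) := rfl
lemma uE1 : uE 1 = (1 : Fin 8) := rfl
lemma uE2 : uE 2 = (2 : Fin 8) := rfl
lemma uE3 : uE 3 = (3 : Fin 8) := rfl
lemma lE0 : lE 0 = (4 : Fin 8) := rfl
lemma lE1 : lE 1 = (5 : Fin 8) := rfl
lemma lE2 : lE 2 = (6 : Fin 8) := rfl
lemma lE3 : lE 3 = (7 : Fin 8) := rfl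

lemma mulE8 (A : M8) (a b i j : Fin 8) :
    (A * E8 a b) i j = if j = b then A i a else 0 := by
  rw [Matrix.mul_apply]
  by_cases h : j = b
  · subst h
    simp [E8_apply, ite_and, Finset.sum_ite_eq, Finset.sum_ite_eq', mul_comm]
  · simp [E8_apply, ite_and, h, Ne.symm h]

lemma E8mul (A : M8) (a b i j : Fin 8) :
    (E8 a b * A) i j = if i = a then A b j else 0 := by
  rw [Matrix.mul_apply]
  by_cases h : i = a
  · subst h
    simp [E8_apply, ite_and, Finset.sum_ite_eq, Finset.sum_ite_eq']
  · simp [E8_apply, ite_and, h, Ne.symm h]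

lemma P00 (l : ℂ) (q : M2) (m : M3) : Pmat l q m 0 0 = l := rfl
lemma P01 (l : ℂ) (q : M2) (m : M3) : Pmat l q m 0 1 = (0 : ℂ) := rfl
lemma P02 (l : ℂ) (q : M2) (m : M3) : Pmat l q m 0 2 = (0 : ℂ) := rfl
lemma P03 (l : ℂ) (q : M2) (m : M3) : Pmat l q m 0 3 = (0 : ℂ) := rfl
lemma P04 (l : ℂ) (q : M2) (m : M3) : Pmat l q m 0 4 = (0 : ℂ) := rfl
lemma P05 (l : ℂ) (q : M2) (m : M3) : Pmat l q m 0 5 = (0 : ℂ) := rfl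
lemma P06 (l : ℂ) (q : M2) (m : M3) : Pmat l q m 0 6 = (0 : ℂ) := rfl
lemma P07 (l : ℂ) (q : M2) (m : M3) : Pmat l q m 0 7 = (0 : ℂ) := rfl
lemma P10 (l : ℂ) (q : M2) (m : M3) : Pmat l q m 1 0 = (0 : ℂ) := rfl
lemma P11 (l : ℂ) (q : M2) (m : M3) : Pmat l q m 1 1 = conj l := rfl
lemma P12 (l : ℂ) (q : M2) (m : M3) : Pmat l q m 1 2 = (0 : ℂ) := rfl
lemma P13 (l : ℂ) (q : M2) (m : M3) : Pmat l q m 1 3 = (0 : ℂ) := rfl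
lemma P14 (l : ℂ) (q : M2) (m : M3) : Pmat l q m 1 4 = (0 : ℂ) := rfl
lemma P15 (l : ℂ) (q : M2) (m : M3) : Pmat l q m 1 5 = (0 : ℂ) := rfl
lemma P16 (l : ℂ) (q : M2) (m : M3) : Pmat l q m 1 6 = (0 : ℂ) := rfl
lemma P17 (l : ℂ) (q : M2) (m : M3) : Pmat l q m 1 7 = (0 : ℂ) := rfl
lemma P20 (l : ℂ) (q : M2) (m : M3) : Pmat l q m 2 0 = (0 : ℂ) := rfl
lemma P21 (l : ℂ) (q : M2) (m : M3) : Pmat l q m 2 1 = (0 : ℂ) := rfl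
lemma P22 (l : ℂ) (q : M2) (m : M3) : Pmat l q m 2 2 = q 0 0 := rfl
lemma P23 (l : ℂ) (q : M2) (m : M3) : Pmat l q m 2 3 = q 0 1 := rfl
lemma P24 (l : ℂ) (q : M2) (m : M3) : Pmat l q m 2 4 = (0 : ℂ) := rfl
lemma P25 (l : ℂ) (q : M2) (m : M3) : Pmat l q m 2 5 = (0 : ℂ) := rfl
lemma P26 (l : ℂ) (q : M2) (m : M3) : Pmat l q m 2 6 = (0 : ℂ) := rfl
lemma P27 (l : ℂ) (q : M2) (m : M3) : Pmat l q m 2 7 = (0 : ℂ) := rfl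
lemma P30 (l : ℂ) (q : M2) (m : M3) : Pmat l q m 3 0 = (0 : ℂ) := rfl
lemma P31 (l : ℂ) (q : M2) (m : M3) : Pmat l q m 3 1 = (0 : ℂ) := rfl
lemma P32 (l : ℂ) (q : M2) (m : M3) : Pmat l q m 3 2 = q 1 0 := rfl
lemma P33 (l : ℂ) (q : M2) (m : M3) : Pmat l q m 3 3 = q 1 1 := rfl
lemma P34 (l : ℂ) (q : M2) (m : M3) : Pmat l q m 3 4 = (0 : ℂ) := rfl
lemma P35 (l : ℂ) (q : M2) (m : M3) : Pmat l q m 3 5 = (0 : ℂ) := rfl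
lemma P36 (l : ℂ) (q : M2) (m : M3) : Pmat l q m 3 6 = (0 : ℂ) := rfl
lemma P37 (l : ℂ) (q : M2) (m : M3) : Pmat l q m 3 7 = (0 : ℂ) := rfl
lemma P40 (l : ℂ) (q : M2) (m : M3) : Pmat l q m 4 0 = (0 : ℂ) := rfl
lemma P41 (l : ℂ) (q : M2) (m : M3) : Pmat l q m 4 1 = (0 : ℂ) := rfl
lemma P42 (l : ℂ) (q : M2) (m : M3) : Pmat l q m 4 2 = (0 : ℂ) := rfl
lemma P43 (l : ℂ) (q : M2) (m : M3) : Pmat l q m 4 3 = (0 : ℂ) := rfl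
lemma P44 (l : ℂ) (q : M2) (m : M3) : Pmat l q m 4 4 = l := rfl
lemma P45 (l : ℂ) (q : M2) (m : M3) : Pmat l q m 4 5 = (0 : ℂ) := rfl
lemma P46 (l : ℂ) (q : M2) (m : M3) : Pmat l q m 4 6 = (0 : ℂ) := rfl
lemma P47 (l : ℂ) (q : M2) (m : M3) : Pmat l q m 4 7 = (0 : ℂ) := rfl
lemma P50 (l : ℂ) (q : M2) (m : M3) : Pmat l q m 5 0 = (0 : ℂ) := rfl
lemma P51 (l : ℂ) (q : M2) (m : M3) : Pmat l q m 5 1 = (0 : ℂ) := rfl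
lemma P52 (l : ℂ) (q : M2) (m : M3) : Pmat l q m 5 2 = (0 : ℂ) := rfl
lemma P53 (l : ℂ) (q : M2) (m : M3) : Pmat l q m 5 3 = (0 : ℂ) := rfl
lemma P54 (l : ℂ) (q : M2) (m : M3) : Pmat l q m 5 4 = (0 : ℂ) := rfl
lemma P55 (l : ℂ) (q : M2) (m : M3) : Pmat l q m 5 5 = m 0 0 := rfl
lemma P56 (l : ℂ) (q : M2) (m : M3) : Pmat l q m 5 6 = m 0 1 := rfl
lemma P57 (l : ℂ) (q : M2) (m : M3) : Pmat l q m 5 7 = m 0 2 := rfl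
lemma P60 (l : ℂ) (q : M2) (m : M3) : Pmat l q m 6 0 = (0 : ℂ) := rfl
lemma P61 (l : ℂ) (q : M2) (m : M3) : Pmat l q m 6 1 = (0 : ℂ) := rfl
lemma P62 (l : ℂ) (q : M2) (m : M3) : Pmat l q m 6 2 = (0 : ℂ) := rfl
lemma P63 (l : ℂ) (q : M2) (m : M3) : Pmat l q m 6 3 = (0 : ℂ) := rfl
lemma P64 (l : ℂ) (q : M2) (m : M3) : Pmat l q m 6 4 = (0 : ℂ) := rfl
lemma P65 (l : ℂ) (q : M2) (m : M3) : Pmat l q m 6 5 = m 1 0 := rfl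
lemma P66 (l : ℂ) (q : M2) (m : M3) : Pmat l q m 6 6 = m 1 1 := rfl
lemma P67 (l : ℂ) (q : M2) (m : M3) : Pmat l q m 6 7 = m 1 2 := rfl
lemma P70 (l : ℂ) (q : M2) (m : M3) : Pmat l q m 7 0 = (0 : ℂ) := rfl
lemma P71 (l : ℂ) (q : M2) (m : M3) : Pmat l q m 7 1 = (0 : ℂ) := rfl
lemma P72 (l : ℂ) (q : M2) (m : M3) : Pmat l q m 7 2 = (0 : ℂ) := rfl
lemma P73 (l : ℂ) (q : M2) (m : M3) : Pmat l q m 7 3 = (0 : ℂ) := rfl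
lemma P74 (l : ℂ) (q : M2) (m : M3) : Pmat l q m 7 4 = (0 : ℂ) := rfl
lemma P75 (l : ℂ) (q : M2) (m : M3) : Pmat l q m 7 5 = m 2 0 := rfl
lemma P76 (l : ℂ) (q : M2) (m : M3) : Pmat l q m 7 6 = m 2 1 := rfl
lemma P77 (l : ℂ) (q : M2) (m : M3) : Pmat l q m 7 7 = m 2 2 := rfl

set_option maxHeartbeats 2000000 in
lemma Pmat_comm (l : ℂ) (q : M2) (m : M3) (k : Fin 7) :
    Pmat l q m * Cm k = Cm k * Pmat l q m := by
  fin_cases k <;> ext i j <;> fin_cases i <;> fin_cases j <;>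
    simp [Cm_0, Cm_1, Cm_2, Cm_3, Cm_4, Cm_5, Cm_6, uE0, uE1, uE2, uE3,
      lE0, lE1, lE2, lE3, Matrix.mul_add, Matrix.add_mul, Matrix.add_apply,
      mulE8, E8mul, P00, P01, P02, P03, P04, P05, P06, P07, P10, P11, P12, P13, P14, P15, P16, P17, P20, P21, P22, P23, P24, P25, P26, P27, P30, P31, P32, P33, P34, P35, P36, P37, P40, P41, P42, P43, P44, P45, P46, P47, P50, P51, P52, P53, P54, P55, P56, P57, P60, P61, P62, P63, P64, P65, P66, P67, P70, P71, P72, P73, P74, P75, P76, P77]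

/-- the span W = U ⊔ V -/
abbrev Wspan : Submodule ℂ (Module.End ℂ HF) := Submodule.span ℂ (Set.range vF)

lemma mem_W (i : ιT) : vF i ∈ Wspan := Submodule.subset_span ⟨i, rfl⟩

lemma memT11 (x y : Fin 4) (r : Fin 2) : lrOp (E8 (uE x) (uE y)) (R2 r) ∈ Wspan := by
  by_cases h00 : (x, y) = ((0 : Fin 4), (0 : Fin 4))
  · rw [show x = 0 from congrArg Prod.fst h00, show y = 0 from congrArg Prod.snd h00]
    fin_cases r
    · exact mem_W (.inl (0, 0, 0))
    · show lrOp (Cm 0) (E4 1 1 + E4 2 2 + E4 3 3) ∈ Wspan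
      rw [lrOp_add_right, lrOp_add_right]
      exact add_mem (add_mem (mem_W (.inl (0, 1, 1))) (mem_W (.inl (0, 2, 2))))
        (mem_W (.inl (0, 3, 3)))
  · by_cases h11 : (x, y) = ((1 : Fin 4), (1 : Fin 4))
    · rw [show x = 1 from congrArg Prod.fst h11, show y = 1 from congrArg Prod.snd h11]
      fin_cases r
      · exact mem_W (.inl (4, 0, 0))
      · show lrOp (Cm 4) (E4 1 1 + E4 2 2 + E4 3 3) ∈ Wspan
        rw [lrOp_add_right, lrOp_add_right]
        exact add_mem (add_mem (mem_W (.inl (4, 1, 1))) (mem_W (.inl (4, 2, 2))))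
          (mem_W (.inl (4, 3, 3)))
    · by_cases h33 : (x, y) = ((3 : Fin 4), (3 : Fin 4))
      · rw [show x = 3 from congrArg Prod.fst h33, show y = 3 from congrArg Prod.snd h33]
        have hsplit : lrOp (E8 (uE 3) (uE 3)) (R2 r)
            = lrOp (Cm 5) (R2 r) - lrOp (E8 (uE 2) (uE 2)) (R2 r) := by
          rw [Cm_5, lrOp_add_left]; abel
        rw [hsplit]
        refine sub_mem ?_ (mem_W (.inr (.inl (⟨(2, 2), by decide⟩, r))))
        fin_cases r
        · exact mem_W (.inl (5, 0, 0))
        · show lrOp (Cm 5) (E4 1 1 + E4 2 2 + E4 3 3) ∈ Wspan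
          rw [lrOp_add_right, lrOp_add_right]
          exact add_mem (add_mem (mem_W (.inl (5, 1, 1))) (mem_W (.inl (5, 2, 2))))
            (mem_W (.inl (5, 3, 3)))
      · exact mem_W (.inr (.inl (⟨(x, y), ⟨h00, h11, h33⟩⟩, r)))

lemma memT22 (x y : Fin 4) (r : Fin 3) : lrOp (E8 (lE x) (lE y)) (R3 r) ∈ Wspan := by
  by_cases h00 : (x, y) = ((0 : Fin 4), (0 : Fin 4))
  · rw [show x = 0 from congrArg Prod.fst h00, show y = 0 from congrArg Prod.snd h00]
    fin_cases r
    · exact mem_W (.inl (3, 0, 0))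
    · exact mem_W (.inl (3, 1, 1))
    · show lrOp (Cm 3) (E4 2 2 + E4 3 3) ∈ Wspan
      rw [lrOp_add_right]
      exact add_mem (mem_W (.inl (3, 2, 2))) (mem_W (.inl (3, 3, 3)))
  · by_cases h33 : (x, y) = ((3 : Fin 4), (3 : Fin 4))
    · rw [show x = 3 from congrArg Prod.fst h33, show y = 3 from congrArg Prod.snd h33]
      have hsplit : lrOp (E8 (lE 3) (lE 3)) (R3 r)
          = lrOp (Cm 6) (R3 r) - lrOp (E8 (lE 1) (lE 1)) (R3 r)
            - lrOp (E8 (lE 2) (lE 2)) (R3 r) := by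
        rw [Cm_6, lrOp_add_left, lrOp_add_left]; abel
      rw [hsplit]
      refine sub_mem (sub_mem ?_ (mem_W (.inr (.inr (.inl (⟨(1, 1), by decide⟩, r))))))
        (mem_W (.inr (.inr (.inl (⟨(2, 2), by decide⟩, r)))))
      fin_cases r
      · exact mem_W (.inl (6, 0, 0))
      · exact mem_W (.inl (6, 1, 1))
      · show lrOp (Cm 6) (E4 2 2 + E4 3 3) ∈ Wspan
        rw [lrOp_add_right]
        exact add_mem (mem_W (.inl (6, 2, 2))) (mem_W (.inl (6, 3, 3)))
    · exact mem_W (.inr (.inr (.inl (⟨(x, y), ⟨h00, h33⟩⟩, r))))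

lemma memTR (x y : Fin 4) : lrOp (E8 (uE x) (lE y)) (E4 0 0) ∈ Wspan := by
  by_cases h00 : (x, y) = ((0 : Fin 4), (0 : Fin 4))
  · rw [show x = 0 from congrArg Prod.fst h00, show y = 0 from congrArg Prod.snd h00]
    exact mem_W (.inl (1, 0, 0))
  · exact mem_W (.inr (.inr (.inr (.inl ⟨(x, y), h00⟩))))

lemma memBL (x y : Fin 4) : lrOp (E8 (lE x) (uE y)) (E4 0 0) ∈ Wspan := by
  by_cases h00 : (x, y) = ((0 : Fin 4), (0 : Fin 4))
  · rw [show x = 0 from congrArg Prod.fst h00, show y = 0 from congrArg Prod.snd h00]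
    exact mem_W (.inl (2, 0, 0))
  · exact mem_W (.inr (.inr (.inr (.inr ⟨(x, y), h00⟩))))

/-- conjByJ of every U-generator lies in W. -/
lemma memV (k : Fin 7) (d c : Fin 4) :
    conjByJ (lrOp (Cm k) (E4 d c)) ∈ Wspan := by
  fin_cases k
  · show conjByJ (lrOp (Cm 0) (E4 d c)) ∈ Wspan
    rw [Cm_0, conj_lrOp_uu]; exact memT22 c d 0
  · show conjByJ (lrOp (Cm 1) (E4 d c)) ∈ Wspan
    rw [Cm_1, conj_lrOp_ul]; exact memBL c d
  · show conjByJ (lrOp (Cm 2) (E4 d c)) ∈ Wspan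
    rw [Cm_2, conj_lrOp_lu]; exact memTR c d
  · show conjByJ (lrOp (Cm 3) (E4 d c)) ∈ Wspan
    rw [Cm_3, conj_lrOp_ll]; exact memT11 c d 0
  · show conjByJ (lrOp (Cm 4) (E4 d c)) ∈ Wspan
    rw [Cm_4, conj_lrOp_uu]; exact memT22 c d 1
  · show conjByJ (lrOp (Cm 5) (E4 d c)) ∈ Wspan
    rw [Cm_5, lrOp_add_left, conjByJ_add, conj_lrOp_uu, conj_lrOp_uu, ← lrOp_add_right]
    exact memT22 c d 2
  · show conjByJ (lrOp (Cm 6) (E4 d c)) ∈ Wspan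
    rw [Cm_6, lrOp_add_left, lrOp_add_left, conjByJ_add, conjByJ_add,
      conj_lrOp_ll, conj_lrOp_ll, conj_lrOp_ll, ← lrOp_add_right, ← lrOp_add_right]
    exact memT11 c d 1

/-- every V-generator of the family is a conjByJ of a U-generator. -/
lemma vF_inr_eq_conj : ∀ i : ιT, (∃ k d c, i = .inl (k, d, c)) ∨
    (∃ j : ιT, (∃ k d c, j = (.inl (k, d, c) : ιT)) ∧ vF i = conjByJ (vF j)) := by
  rintro (⟨k, d, c⟩ | ⟨⟨⟨x, y⟩, hp⟩, r⟩ | ⟨⟨⟨x, y⟩, hp⟩, r⟩ | ⟨⟨x, y⟩, hp⟩ | ⟨⟨x, y⟩, hp⟩)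
  · exact Or.inl ⟨k, d, c, rfl⟩
  · refine Or.inr ⟨.inl (if r = 0 then 3 else 6, y, x), ⟨_, _, _, rfl⟩, ?_⟩
    fin_cases r
    · show vF _ = conjByJ (vF (.inl (3, y, x)))
      show lrOp (E8 (uE x) (uE y)) (R2 0) = conjByJ (lrOp (Cm 3) (E4 y x))
      rw [Cm_3, conj_lrOp_ll]; rfl
    · show vF _ = conjByJ (vF (.inl (6, y, x)))
      show lrOp (E8 (uE x) (uE y)) (R2 1) = conjByJ (lrOp (Cm 6) (E4 y x))
      rw [Cm_6, lrOp_add_left, lrOp_add_left, conjByJ_add, conjByJ_add,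
        conj_lrOp_ll, conj_lrOp_ll, conj_lrOp_ll, ← lrOp_add_right, ← lrOp_add_right]
      rfl
  · refine Or.inr ⟨.inl (if r = 0 then 0 else if r = 1 then 4 else 5, y, x), ⟨_, _, _, rfl⟩, ?_⟩
    fin_cases r
    · show lrOp (E8 (lE x) (lE y)) (R3 0) = conjByJ (vF (.inl (0, y, x)))
      show _ = conjByJ (lrOp (Cm 0) (E4 y x))
      rw [Cm_0, conj_lrOp_uu]; rfl
    · show lrOp (E8 (lE x) (lE y)) (R3 1) = conjByJ (lrOp (Cm 4) (E4 y x))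
      rw [Cm_4, conj_lrOp_uu]; rfl
    · show lrOp (E8 (lE x) (lE y)) (R3 2) = conjByJ (lrOp (Cm 5) (E4 y x))
      rw [Cm_5, lrOp_add_left, conjByJ_add, conj_lrOp_uu, conj_lrOp_uu, ← lrOp_add_right]
      rfl
  · refine Or.inr ⟨.inl (2, y, x), ⟨_, _, _, rfl⟩, ?_⟩
    show lrOp (E8 (uE x) (lE y)) (E4 0 0) = conjByJ (lrOp (Cm 2) (E4 y x))
    rw [Cm_2, conj_lrOp_lu]
  · refine Or.inr ⟨.inl (1, y, x), ⟨_, _, _, rfl⟩, ?_⟩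
    show lrOp (E8 (lE x) (uE y)) (E4 0 0) = conjByJ (lrOp (Cm 1) (E4 y x))
    rw [Cm_1, conj_lrOp_ul]

abbrev βm (b : Fin 8) (d : Fin 4) : HF := Matrix.single b d (1 : ℂ)

def w1 : Fin 8 → ℂ := ![1, 1, 0, 0, 1, 0, 0, 0]
def wI : Fin 8 → ℂ := ![Complex.I, -Complex.I, 0, 0, Complex.I, 0, 0, 0]
def wq1 : Fin 8 → ℂ := ![0, 0, 1, 1, 0, 0, 0, 0]
def wqI : Fin 8 → ℂ := ![0, 0, Complex.I, -Complex.I, 0, 0, 0, 0]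
def w5 : Fin 8 → ℂ := ![0, 0, 0, 0, 0, 1, 0, 0]
def w6 : Fin 8 → ℂ := ![0, 0, 0, 0, 0, 0, 1, 0]
def w7 : Fin 8 → ℂ := ![0, 0, 0, 0, 0, 0, 0, 1]
@[simp] lemma w1_0 : w1 0 = 1 := rfl
@[simp] lemma w1_1 : w1 1 = 1 := rfl
@[simp] lemma w1_2 : w1 2 = 0 := rfl
@[simp] lemma w1_3 : w1 3 = 0 := rfl
@[simp] lemma w1_4 : w1 4 = 1 := rfl
@[simp] lemma w1_5 : w1 5 = 0 := rfl
@[simp] lemma w1_6 : w1 6 = 0 := rfl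
@[simp] lemma w1_7 : w1 7 = 0 := rfl
@[simp] lemma wI_0 : wI 0 = Complex.I := rfl
@[simp] lemma wI_1 : wI 1 = -Complex.I := rfl
@[simp] lemma wI_2 : wI 2 = 0 := rfl
@[simp] lemma wI_3 : wI 3 = 0 := rfl
@[simp] lemma wI_4 : wI 4 = Complex.I := rfl
@[simp] lemma wI_5 : wI 5 = 0 := rfl
@[simp] lemma wI_6 : wI 6 = 0 := rfl
@[simp] lemma wI_7 : wI 7 = 0 := rfl
@[simp] lemma wq1_0 : wq1 0 = 0 := rfl
@[simp] lemma wq1_1 : wq1 1 = 0 := rfl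
@[simp] lemma wq1_2 : wq1 2 = 1 := rfl
@[simp] lemma wq1_3 : wq1 3 = 1 := rfl
@[simp] lemma wq1_4 : wq1 4 = 0 := rfl
@[simp] lemma wq1_5 : wq1 5 = 0 := rfl
@[simp] lemma wq1_6 : wq1 6 = 0 := rfl
@[simp] lemma wq1_7 : wq1 7 = 0 := rfl
@[simp] lemma wqI_0 : wqI 0 = 0 := rfl
@[simp] lemma wqI_1 : wqI 1 = 0 := rfl
@[simp] lemma wqI_2 : wqI 2 = Complex.I := rfl
@[simp] lemma wqI_3 : wqI 3 = -Complex.I := rfl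
@[simp] lemma wqI_4 : wqI 4 = 0 := rfl
@[simp] lemma wqI_5 : wqI 5 = 0 := rfl
@[simp] lemma wqI_6 : wqI 6 = 0 := rfl
@[simp] lemma wqI_7 : wqI 7 = 0 := rfl
@[simp] lemma w5_0 : w5 0 = 0 := rfl
@[simp] lemma w5_1 : w5 1 = 0 := rfl
@[simp] lemma w5_2 : w5 2 = 0 := rfl
@[simp] lemma w5_3 : w5 3 = 0 := rfl
@[simp] lemma w5_4 : w5 4 = 0 := rfl
@[simp] lemma w5_5 : w5 5 = 1 := rfl
@[simp] lemma w5_6 : w5 6 = 0 := rfl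
@[simp] lemma w5_7 : w5 7 = 0 := rfl
@[simp] lemma w6_0 : w6 0 = 0 := rfl
@[simp] lemma w6_1 : w6 1 = 0 := rfl
@[simp] lemma w6_2 : w6 2 = 0 := rfl
@[simp] lemma w6_3 : w6 3 = 0 := rfl
@[simp] lemma w6_4 : w6 4 = 0 := rfl
@[simp] lemma w6_5 : w6 5 = 0 := rfl
@[simp] lemma w6_6 : w6 6 = 1 := rfl
@[simp] lemma w6_7 : w6 7 = 0 := rfl
@[simp] lemma w7_0 : w7 0 = 0 := rfl
@[simp] lemma w7_1 : w7 1 = 0 := rfl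
@[simp] lemma w7_2 : w7 2 = 0 := rfl
@[simp] lemma w7_3 : w7 3 = 0 := rfl
@[simp] lemma w7_4 : w7 4 = 0 := rfl
@[simp] lemma w7_5 : w7 5 = 0 := rfl
@[simp] lemma w7_6 : w7 6 = 0 := rfl
@[simp] lemma w7_7 : w7 7 = 1 := rfl

def qI : M2 := !![Complex.I, 0; 0, -Complex.I]
def qJ : M2 := !![0, 1; -1, 0]

lemma quat0 : IsQuat 0 := ⟨0, 0, by simp, by simp, by simp, by simp⟩
lemma quat1 : IsQuat 1 := ⟨1, 0, by simp [Matrix.one_apply], by simp [Matrix.one_apply],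
  by simp [Matrix.one_apply], by simp [Matrix.one_apply]⟩
lemma quatI : IsQuat qI := ⟨Complex.I, 0, by simp [qI], by simp [qI], by simp [qI],
  by simp [qI, Complex.conj_I]⟩
lemma quatJ : IsQuat qJ := ⟨0, 1, by simp [qJ], by simp [qJ], by simp [qJ], by simp [qJ]⟩

lemma PdiagW1 : Pmat 1 0 0 = Matrix.diagonal w1 := by
  ext i j; fin_cases i <;> fin_cases j <;>
    simp [P00, P01, P02, P03, P04, P05, P06, P07, P10, P11, P12, P13, P14, P15, P16, P17, P20, P21, P22, P23, P24, P25, P26, P27, P30, P31, P32, P33, P34, P35, P36, P37, P40, P41, P42, P43, P44, P45, P46, P47, P50, P51, P52, P53, P54, P55, P56, P57, P60, P61, P62, P63, P64, P65, P66, P67, P70, P71, P72, P73, P74, P75, P76, P77, Matrix.diagonal_apply]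
lemma PdiagWI : Pmat Complex.I 0 0 = Matrix.diagonal wI := by
  ext i j; fin_cases i <;> fin_cases j <;>
    simp [P00, P01, P02, P03, P04, P05, P06, P07, P10, P11, P12, P13, P14, P15, P16, P17, P20, P21, P22, P23, P24, P25, P26, P27, P30, P31, P32, P33, P34, P35, P36, P37, P40, P41, P42, P43, P44, P45, P46, P47, P50, P51, P52, P53, P54, P55, P56, P57, P60, P61, P62, P63, P64, P65, P66, P67, P70, P71, P72, P73, P74, P75, P76, P77, Matrix.diagonal_apply, Complex.conj_I]
lemma PdiagWq1 : Pmat 0 1 0 = Matrix.diagonal wq1 := by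
  ext i j; fin_cases i <;> fin_cases j <;>
    simp [P00, P01, P02, P03, P04, P05, P06, P07, P10, P11, P12, P13, P14, P15, P16, P17, P20, P21, P22, P23, P24, P25, P26, P27, P30, P31, P32, P33, P34, P35, P36, P37, P40, P41, P42, P43, P44, P45, P46, P47, P50, P51, P52, P53, P54, P55, P56, P57, P60, P61, P62, P63, P64, P65, P66, P67, P70, P71, P72, P73, P74, P75, P76, P77, Matrix.diagonal_apply, Matrix.one_apply]
lemma PdiagWqI : Pmat 0 qI 0 = Matrix.diagonal wqI := by
  ext i j; fin_cases i <;> fin_cases j <;>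
    simp [P00, P01, P02, P03, P04, P05, P06, P07, P10, P11, P12, P13, P14, P15, P16, P17, P20, P21, P22, P23, P24, P25, P26, P27, P30, P31, P32, P33, P34, P35, P36, P37, P40, P41, P42, P43, P44, P45, P46, P47, P50, P51, P52, P53, P54, P55, P56, P57, P60, P61, P62, P63, P64, P65, P66, P67, P70, P71, P72, P73, P74, P75, P76, P77, Matrix.diagonal_apply, qI]
lemma PdiagW5 : Pmat 0 0 (Matrix.single 0 0 1) = Matrix.diagonal w5 := by
  ext i j; fin_cases i <;> fin_cases j <;>
    simp [P00, P01, P02, P03, P04, P05, P06, P07, P10, P11, P12, P13, P14, P15, P16, P17, P20, P21, P22, P23, P24, P25, P26, P27, P30, P31, P32, P33, P34, P35, P36, P37, P40, P41, P42, P43, P44, P45, P46, P47, P50, P51, P52, P53, P54, P55, P56, P57, P60, P61, P62, P63, P64, P65, P66, P67, P70, P71, P72, P73, P74, P75, P76, P77, Matrix.diagonal_apply, Matrix.single, Matrix.of_apply]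
lemma PdiagW6 : Pmat 0 0 (Matrix.single 1 1 1) = Matrix.diagonal w6 := by
  ext i j; fin_cases i <;> fin_cases j <;>
    simp [P00, P01, P02, P03, P04, P05, P06, P07, P10, P11, P12, P13, P14, P15, P16, P17, P20, P21, P22, P23, P24, P25, P26, P27, P30, P31, P32, P33, P34, P35, P36, P37, P40, P41, P42, P43, P44, P45, P46, P47, P50, P51, P52, P53, P54, P55, P56, P57, P60, P61, P62, P63, P64, P65, P66, P67, P70, P71, P72, P73, P74, P75, P76, P77, Matrix.diagonal_apply, Matrix.single, Matrix.of_apply]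
lemma PdiagW7 : Pmat 0 0 (Matrix.single 2 2 1) = Matrix.diagonal w7 := by
  ext i j; fin_cases i <;> fin_cases j <;>
    simp [P00, P01, P02, P03, P04, P05, P06, P07, P10, P11, P12, P13, P14, P15, P16, P17, P20, P21, P22, P23, P24, P25, P26, P27, P30, P31, P32, P33, P34, P35, P36, P37, P40, P41, P42, P43, P44, P45, P46, P47, P50, P51, P52, P53, P54, P55, P56, P57, P60, P61, P62, P63, P64, P65, P66, P67, P70, P71, P72, P73, P74, P75, P76, P77, Matrix.diagonal_apply, Matrix.single, Matrix.of_apply]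
lemma PqJ_eq : Pmat 0 qJ 0 = E8 2 3 - E8 3 2 := by
  ext i j; fin_cases i <;> fin_cases j <;>
    simp [P00, P01, P02, P03, P04, P05, P06, P07, P10, P11, P12, P13, P14, P15, P16, P17, P20, P21, P22, P23, P24, P25, P26, P27, P30, P31, P32, P33, P34, P35, P36, P37, P40, P41, P42, P43, P44, P45, P46, P47, P50, P51, P52, P53, P54, P55, P56, P57, P60, P61, P62, P63, P64, P65, P66, P67, P70, P71, P72, P73, P74, P75, P76, P77, qJ, E8_apply, Matrix.sub_apply]
lemma Pm01_eq : Pmat 0 0 (Matrix.single 0 1 1) = E8 5 6 := by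
  ext i j; fin_cases i <;> fin_cases j <;>
    simp [P00, P01, P02, P03, P04, P05, P06, P07, P10, P11, P12, P13, P14, P15, P16, P17, P20, P21, P22, P23, P24, P25, P26, P27, P30, P31, P32, P33, P34, P35, P36, P37, P40, P41, P42, P43, P44, P45, P46, P47, P50, P51, P52, P53, P54, P55, P56, P57, P60, P61, P62, P63, P64, P65, P66, P67, P70, P71, P72, P73, P74, P75, P76, P77, E8_apply, Matrix.single, Matrix.of_apply]
lemma Pm02_eq : Pmat 0 0 (Matrix.single 0 2 1) = E8 5 7 := by
  ext i j; fin_cases i <;> fin_cases j <;>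
    simp [P00, P01, P02, P03, P04, P05, P06, P07, P10, P11, P12, P13, P14, P15, P16, P17, P20, P21, P22, P23, P24, P25, P26, P27, P30, P31, P32, P33, P34, P35, P36, P37, P40, P41, P42, P43, P44, P45, P46, P47, P50, P51, P52, P53, P54, P55, P56, P57, P60, P61, P62, P63, P64, P65, P66, P67, P70, P71, P72, P73, P74, P75, P76, P77, E8_apply, Matrix.single, Matrix.of_apply]

lemma cent_comm {T : Module.End ℂ HF} (hT : T ∈ Subalgebra.centralizer ℂ piFSet)
    (l : ℂ) (q : M2) (m : M3) (hq : IsQuat q) (ξ : HF) :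
    Pmat l q m * T ξ = T (Pmat l q m * ξ) := by
  have h := (Subalgebra.mem_centralizer_iff ℂ).mp hT (piF l q m) ⟨l, q, m, hq, rfl⟩
  exact (LinearMap.ext_iff.mp h ξ)

lemma diag_mul_apply (w : Fin 8 → ℂ) (M : HF) (i : Fin 8) (j : Fin 4) :
    (Matrix.diagonal w * M) i j = w i * M i j := by
  rw [Matrix.mul_apply]
  simp [Matrix.diagonal, Matrix.of_apply, ite_mul, Finset.sum_ite_eq]

lemma diag_mul_basis (w : Fin 8 → ℂ) (b : Fin 8) (d : Fin 4) :
    Matrix.diagonal w * βm b d = w b • βm b d := by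
  ext i j
  rw [diag_mul_apply, Matrix.smul_apply, smul_eq_mul]
  by_cases h : b = i
  · subst h; rfl
  · simp [Matrix.single, Matrix.of_apply, h]

lemma relDiag {T : Module.End ℂ HF} (hT : T ∈ Subalgebra.centralizer ℂ piFSet)
    {l : ℂ} {q : M2} {m : M3} {w : Fin 8 → ℂ} (hq : IsQuat q)
    (hPw : Pmat l q m = Matrix.diagonal w) (a b : Fin 8) (c d : Fin 4) :
    w a * T (βm b d) a c = w b * T (βm b d) a c := by
  have h := cent_comm hT l q m hq (βm b d)
  rw [hPw, diag_mul_basis, _root_.map_smul] at h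
  have h2 : (Matrix.diagonal w * T (βm b d)) a c = (w b • T (βm b d)) a c := by rw [h]
  rw [diag_mul_apply] at h2
  simpa using h2

lemma cancel01 {t : ℂ} (h : 1 * t = 0 * t) : t = 0 := by simpa using h
lemma cancel10 {t : ℂ} (h : 0 * t = 1 * t) : t = 0 := by simpa using h.symm
lemma cancelI {t : ℂ} (h : Complex.I * t = -Complex.I * t) : t = 0 := by
  have h2 : (2 * Complex.I) * t = 0 := by linear_combination h
  rcases mul_eq_zero.mp h2 with h3 | h3
  · exact absurd h3 (by simp [Complex.I_ne_zero])
  · exact h3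
lemma cancelI' {t : ℂ} (h : -Complex.I * t = Complex.I * t) : t = 0 := cancelI h.symm

lemma E8_mul_HF (a a' : Fin 8) (M : HF) (i : Fin 8) (j : Fin 4) :
    (E8 a a' * M) i j = if i = a then M a' j else 0 := by
  rw [Matrix.mul_apply]
  by_cases h : i = a
  · subst h
    simp [E8_apply, ite_and, Finset.sum_ite_eq, Finset.sum_ite_eq']
  · simp [E8_apply, ite_and, h, Ne.symm h]

lemma tie23 {T : Module.End ℂ HF} (hT : T ∈ Subalgebra.centralizer ℂ piFSet) (c d : Fin 4) :
    T (βm 3 d) 3 c = T (βm 2 d) 2 c := by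
  have h := cent_comm hT 0 qJ 0 quatJ (βm 3 d)
  rw [PqJ_eq] at h
  have hb : (E8 2 3 - E8 3 2) * βm 3 d = βm 2 d := by
    ext i j
    rw [Matrix.sub_mul, Matrix.sub_apply, E8_mul_HF, E8_mul_HF]
    by_cases h2 : i = (2 : Fin 8)
    · subst h2; simp [Matrix.single, Matrix.of_apply]
    · by_cases h3 : i = (3 : Fin 8)
      · subst h3; simp [Matrix.single, Matrix.of_apply]
      · have hns : ¬((2 : Fin 8) = i ∧ d = j) := fun hc => h2 hc.1.symm
        simp [h2, h3, Matrix.single, Matrix.of_apply, hns]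
  rw [hb, Matrix.sub_mul] at h
  have h2 : (E8 2 3 * T (βm 3 d) - E8 3 2 * T (βm 3 d)) 2 c = T (βm 2 d) 2 c := by rw [h]
  rw [Matrix.sub_apply, E8_mul_HF, E8_mul_HF] at h2
  simpa using h2

lemma tie56 {T : Module.End ℂ HF} (hT : T ∈ Subalgebra.centralizer ℂ piFSet) (c d : Fin 4) :
    T (βm 6 d) 6 c = T (βm 5 d) 5 c := by
  have h := cent_comm hT 0 0 (Matrix.single 0 1 1) quat0 (βm 6 d)
  rw [Pm01_eq] at h
  have hb : E8 5 6 * βm 6 d = βm 5 d := by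
    ext i j
    rw [E8_mul_HF]
    by_cases h2 : i = (5 : Fin 8)
    · subst h2; simp [Matrix.single, Matrix.of_apply]
    · have hns : ¬((5 : Fin 8) = i ∧ d = j) := fun hc => h2 hc.1.symm
      simp [h2, Matrix.single, Matrix.of_apply, hns]
  rw [hb] at h
  have h2 : (E8 5 6 * T (βm 6 d)) 5 c = T (βm 5 d) 5 c := by rw [h]
  rw [E8_mul_HF] at h2
  simpa using h2

lemma tie57 {T : Module.End ℂ HF} (hT : T ∈ Subalgebra.centralizer ℂ piFSet) (c d : Fin 4) :
    T (βm 7 d) 7 c = T (βm 5 d) 5 c := by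
  have h := cent_comm hT 0 0 (Matrix.single 0 2 1) quat0 (βm 7 d)
  rw [Pm02_eq] at h
  have hb : E8 5 7 * βm 7 d = βm 5 d := by
    ext i j
    rw [E8_mul_HF]
    by_cases h2 : i = (5 : Fin 8)
    · subst h2; simp [Matrix.single, Matrix.of_apply]
    · have hns : ¬((5 : Fin 8) = i ∧ d = j) := fun hc => h2 hc.1.symm
      simp [h2, Matrix.single, Matrix.of_apply, hns]
  rw [hb] at h
  have h2 : (E8 5 7 * T (βm 7 d)) 5 c = T (βm 5 d) 5 c := by rw [h]
  rw [E8_mul_HF] at h2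
  simpa using h2

lemma End_ext {S T' : Module.End ℂ HF}
    (h : ∀ (b : Fin 8) (d : Fin 4), S (βm b d) = T' (βm b d)) : S = T' := by
  refine LinearMap.ext fun ξ => ?_
  rw [matrix_eq_sum_single ξ, map_sum, map_sum]
  refine Finset.sum_congr rfl fun b _ => ?_
  rw [map_sum, map_sum]
  refine Finset.sum_congr rfl fun d _ => ?_
  have hsb : Matrix.single b d (ξ b d) = ξ b d • βm b d := by
    rw [Matrix.smul_single, smul_eq_mul, mul_one]
  rw [hsb, _root_.map_smul, _root_.map_smul, h]

set_option maxHeartbeats 4000000 in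
lemma U_rep {T : Module.End ℂ HF} (hT : T ∈ Subalgebra.centralizer ℂ piFSet) :
    T = ∑ k : Fin 7, ∑ d' : Fin 4, ∑ c' : Fin 4,
      (T (βm (brF k) d') (arF k) c') • lrOp (Cm k) (E4 d' c') := by
  apply End_ext
  intro b d
  funext a c
  simp only [LinearMap.sum_apply, LinearMap.smul_apply, Matrix.sum_apply,
    Matrix.smul_apply, lrOp_apply, middle_apply, E4_apply', smul_eq_mul,
    mul_ite, mul_one, mul_zero, ite_and, Finset.sum_ite_irrel,
    Finset.sum_const_zero, Finset.sum_ite_eq]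
  fin_cases a <;> fin_cases b <;>
    simp [Fin.sum_univ_seven, uE0, uE1, uE2, uE3, lE0, lE1, lE2, lE3,
      E8_apply, Matrix.add_apply]
  · have h := relDiag hT quat0 PdiagWI 0 1 c d
    simp only [wI_0, wI_1] at h
    exact cancelI h
  · have h := relDiag hT quat0 PdiagW1 0 2 c d
    simp only [w1_0, w1_2] at h
    exact cancel01 h
  · have h := relDiag hT quat0 PdiagW1 0 3 c d
    simp only [w1_0, w1_3] at h
    exact cancel01 h
  · have h := relDiag hT quat0 PdiagW1 0 5 c d
    simp only [w1_0, w1_5] at h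
    exact cancel01 h
  · have h := relDiag hT quat0 PdiagW1 0 6 c d
    simp only [w1_0, w1_6] at h
    exact cancel01 h
  · have h := relDiag hT quat0 PdiagW1 0 7 c d
    simp only [w1_0, w1_7] at h
    exact cancel01 h
  · have h := relDiag hT quat0 PdiagWI 1 0 c d
    simp only [wI_1, wI_0] at h
    exact cancelI' h
  · have h := relDiag hT quat0 PdiagW1 1 2 c d
    simp only [w1_1, w1_2] at h
    exact cancel01 h
  · have h := relDiag hT quat0 PdiagW1 1 3 c d
    simp only [w1_1, w1_3] at h
    exact cancel01 h
  · have h := relDiag hT quat0 PdiagWI 1 4 c d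
    simp only [wI_1, wI_4] at h
    exact cancelI' h
  · have h := relDiag hT quat0 PdiagW1 1 5 c d
    simp only [w1_1, w1_5] at h
    exact cancel01 h
  · have h := relDiag hT quat0 PdiagW1 1 6 c d
    simp only [w1_1, w1_6] at h
    exact cancel01 h
  · have h := relDiag hT quat0 PdiagW1 1 7 c d
    simp only [w1_1, w1_7] at h
    exact cancel01 h
  · have h := relDiag hT quat0 PdiagW1 2 0 c d
    simp only [w1_2, w1_0] at h
    exact cancel10 h
  · have h := relDiag hT quat0 PdiagW1 2 1 c d
    simp only [w1_2, w1_1] at h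
    exact cancel10 h
  · exact (tie23 hT c d).symm
  · have h := relDiag hT quatI PdiagWqI 2 3 c d
    simp only [wqI_2, wqI_3] at h
    exact cancelI h
  · have h := relDiag hT quat0 PdiagW1 2 4 c d
    simp only [w1_2, w1_4] at h
    exact cancel10 h
  · have h := relDiag hT quat1 PdiagWq1 2 5 c d
    simp only [wq1_2, wq1_5] at h
    exact cancel01 h
  · have h := relDiag hT quat1 PdiagWq1 2 6 c d
    simp only [wq1_2, wq1_6] at h
    exact cancel01 h
  · have h := relDiag hT quat1 PdiagWq1 2 7 c d
    simp only [wq1_2, wq1_7] at h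
    exact cancel01 h
  · have h := relDiag hT quat0 PdiagW1 3 0 c d
    simp only [w1_3, w1_0] at h
    exact cancel10 h
  · have h := relDiag hT quat0 PdiagW1 3 1 c d
    simp only [w1_3, w1_1] at h
    exact cancel10 h
  · have h := relDiag hT quatI PdiagWqI 3 2 c d
    simp only [wqI_3, wqI_2] at h
    exact cancelI' h
  · have h := relDiag hT quat0 PdiagW1 3 4 c d
    simp only [w1_3, w1_4] at h
    exact cancel10 h
  · have h := relDiag hT quat1 PdiagWq1 3 5 c d
    simp only [wq1_3, wq1_5] at h
    exact cancel01 h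
  · have h := relDiag hT quat1 PdiagWq1 3 6 c d
    simp only [wq1_3, wq1_6] at h
    exact cancel01 h
  · have h := relDiag hT quat1 PdiagWq1 3 7 c d
    simp only [wq1_3, wq1_7] at h
    exact cancel01 h
  · have h := relDiag hT quat0 PdiagWI 4 1 c d
    simp only [wI_4, wI_1] at h
    exact cancelI h
  · have h := relDiag hT quat0 PdiagW1 4 2 c d
    simp only [w1_4, w1_2] at h
    exact cancel01 h
  · have h := relDiag hT quat0 PdiagW1 4 3 c d
    simp only [w1_4, w1_3] at h
    exact cancel01 h
  · have h := relDiag hT quat0 PdiagW1 4 5 c d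
    simp only [w1_4, w1_5] at h
    exact cancel01 h
  · have h := relDiag hT quat0 PdiagW1 4 6 c d
    simp only [w1_4, w1_6] at h
    exact cancel01 h
  · have h := relDiag hT quat0 PdiagW1 4 7 c d
    simp only [w1_4, w1_7] at h
    exact cancel01 h
  · have h := relDiag hT quat0 PdiagW1 5 0 c d
    simp only [w1_5, w1_0] at h
    exact cancel10 h
  · have h := relDiag hT quat0 PdiagW1 5 1 c d
    simp only [w1_5, w1_1] at h
    exact cancel10 h
  · have h := relDiag hT quat1 PdiagWq1 5 2 c d
    simp only [wq1_5, wq1_2] at h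
    exact cancel10 h
  · have h := relDiag hT quat1 PdiagWq1 5 3 c d
    simp only [wq1_5, wq1_3] at h
    exact cancel10 h
  · have h := relDiag hT quat0 PdiagW1 5 4 c d
    simp only [w1_5, w1_4] at h
    exact cancel10 h
  · exact (tie57 hT c d).symm
  · have h := relDiag hT quat0 PdiagW5 5 6 c d
    simp only [w5_5, w5_6] at h
    exact cancel01 h
  · have h := relDiag hT quat0 PdiagW5 5 7 c d
    simp only [w5_5, w5_7] at h
    exact cancel01 h
  · have h := relDiag hT quat0 PdiagW1 6 0 c d
    simp only [w1_6, w1_0] at h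
    exact cancel10 h
  · have h := relDiag hT quat0 PdiagW1 6 1 c d
    simp only [w1_6, w1_1] at h
    exact cancel10 h
  · have h := relDiag hT quat1 PdiagWq1 6 2 c d
    simp only [wq1_6, wq1_2] at h
    exact cancel10 h
  · have h := relDiag hT quat1 PdiagWq1 6 3 c d
    simp only [wq1_6, wq1_3] at h
    exact cancel10 h
  · have h := relDiag hT quat0 PdiagW1 6 4 c d
    simp only [w1_6, w1_4] at h
    exact cancel10 h
  · have h := relDiag hT quat0 PdiagW5 6 5 c d
    simp only [w5_6, w5_5] at h
    exact cancel10 h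
  · rw [tie56 hT c d, tie57 hT c d]
  · have h := relDiag hT quat0 PdiagW6 6 7 c d
    simp only [w6_6, w6_7] at h
    exact cancel01 h
  · have h := relDiag hT quat0 PdiagW1 7 0 c d
    simp only [w1_7, w1_0] at h
    exact cancel10 h
  · have h := relDiag hT quat0 PdiagW1 7 1 c d
    simp only [w1_7, w1_1] at h
    exact cancel10 h
  · have h := relDiag hT quat1 PdiagWq1 7 2 c d
    simp only [wq1_7, wq1_2] at h
    exact cancel10 h
  · have h := relDiag hT quat1 PdiagWq1 7 3 c d
    simp only [wq1_7, wq1_3] at h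
    exact cancel10 h
  · have h := relDiag hT quat0 PdiagW1 7 4 c d
    simp only [w1_7, w1_4] at h
    exact cancel10 h
  · have h := relDiag hT quat0 PdiagW5 7 5 c d
    simp only [w5_7, w5_5] at h
    exact cancel10 h
  · have h := relDiag hT quat0 PdiagW6 7 6 c d
    simp only [w6_7, w6_6] at h
    exact cancel10 h

lemma U_gen_mem (k : Fin 7) (d c : Fin 4) :
    lrOp (Cm k) (E4 d c) ∈ Subalgebra.centralizer ℂ piFSet := by
  rw [Subalgebra.mem_centralizer_iff]
  rintro g ⟨l, q, m, hq, rfl⟩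
  refine LinearMap.ext fun ξ => ?_
  show Pmat l q m * (Cm k * ξ * E4 d c) = Cm k * (Pmat l q m * ξ) * E4 d c
  rw [← Matrix.mul_assoc, ← Matrix.mul_assoc, ← Matrix.mul_assoc, Pmat_comm]

lemma U_le_span {T : Module.End ℂ HF} (hT : T ∈ Subalgebra.centralizer ℂ piFSet) :
    T ∈ Wspan := by
  rw [U_rep hT]
  exact Submodule.sum_mem _ fun k _ => Submodule.sum_mem _ fun d' _ =>
    Submodule.sum_mem _ fun c' _ => Submodule.smul_mem _ _ (mem_W (.inl (k, d', c')))

lemma mem_V_iff {T : Module.End ℂ HF} :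
    T ∈ Subalgebra.centralizer ℂ (conjByJ '' piFSet)
      ↔ conjByJ T ∈ Subalgebra.centralizer ℂ piFSet := by
  rw [Subalgebra.mem_centralizer_iff, Subalgebra.mem_centralizer_iff]
  constructor
  · intro h g hg
    have h2 := h (conjByJ g) ⟨g, hg, rfl⟩
    have h3 := congrArg conjByJ h2
    rwa [conjByJ_mul, conjByJ_mul, conjByJ_conjByJ] at h3
  · intro h g hg
    obtain ⟨g₀, hg₀, rfl⟩ := hg
    have h3 := congrArg conjByJ (h g₀ hg₀)
    rwa [conjByJ_mul, conjByJ_mul, conjByJ_conjByJ] at h3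

lemma conjByJ_zero : conjByJ (0 : Module.End ℂ HF) = 0 := by
  refine LinearMap.ext fun ξ => ?_
  show JF ((0 : Module.End ℂ HF) (JF ξ)) = 0
  rw [LinearMap.zero_apply]
  funext i j
  by_cases h : (i : ℕ) < 4 <;> simp [JF, h]

lemma conjByJ_sum {ι : Type*} (s : Finset ι) (f : ι → Module.End ℂ HF) :
    conjByJ (∑ i ∈ s, f i) = ∑ i ∈ s, conjByJ (f i) := by
  induction s using Finset.cons_induction with
  | empty => simpa using conjByJ_zero
  | cons a s ha ih => rw [Finset.sum_cons, Finset.sum_cons, conjByJ_add, ih]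

lemma V_le_span {T : Module.End ℂ HF}
    (hT : T ∈ Subalgebra.centralizer ℂ (conjByJ '' piFSet)) : T ∈ Wspan := by
  have hS : conjByJ T ∈ Subalgebra.centralizer ℂ piFSet := mem_V_iff.mp hT
  have hrep := U_rep hS
  have hTT : T = conjByJ (conjByJ T) := (conjByJ_conjByJ T).symm
  rw [hTT, hrep]
  rw [conjByJ_sum]
  refine Submodule.sum_mem _ fun k _ => ?_
  rw [conjByJ_sum]
  refine Submodule.sum_mem _ fun d' _ => ?_
  rw [conjByJ_sum]
  refine Submodule.sum_mem _ fun c' _ => ?_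
  rw [conjByJ_smul]
  exact Submodule.smul_mem _ _ (memV k d' c')

lemma W_le_sup : Wspan ≤
    (Subalgebra.toSubmodule (Subalgebra.centralizer ℂ piFSet)
      ⊔ Subalgebra.toSubmodule (Subalgebra.centralizer ℂ (conjByJ '' piFSet))) := by
  rw [Submodule.span_le]
  rintro _ ⟨i, rfl⟩
  rcases vF_inr_eq_conj i with ⟨k, d, c, rfl⟩ | ⟨j, ⟨k, d, c, rfl⟩, heq⟩
  · exact Submodule.mem_sup_left ((Subalgebra.mem_toSubmodule _).mpr (U_gen_mem k d c))
  · refine Submodule.mem_sup_right ?_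
    rw [heq]
    refine (Subalgebra.mem_toSubmodule _).mpr (mem_V_iff.mpr ?_)
    rw [conjByJ_conjByJ]
    exact U_gen_mem k d c

lemma sup_eq_W :
    (Subalgebra.toSubmodule (Subalgebra.centralizer ℂ piFSet)
      ⊔ Subalgebra.toSubmodule (Subalgebra.centralizer ℂ (conjByJ '' piFSet))) = Wspan := by
  refine le_antisymm (sup_le ?_ ?_) W_le_sup
  · intro T hT; exact U_le_span ((Subalgebra.mem_toSubmodule _).mp hT)
  · intro T hT; exact V_le_span ((Subalgebra.mem_toSubmodule _).mp hT)

lemma finrank_W : Module.finrank ℂ Wspan = 210 := by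
  rw [finrank_span_eq_card vF_li, card_ιT]

end SMaux

/-- the sum of the two commutants has dimension 210. -/
theorem stmt_7 :
    Module.finrank ℂ
      ((Subalgebra.toSubmodule (Subalgebra.centralizer ℂ piFSet)
        ⊔ Subalgebra.toSubmodule (Subalgebra.centralizer ℂ (conjByJ '' piFSet))) :
          Submodule ℂ (Module.End ℂ HF)) = 210 := by
  rw [SMaux.sup_eq_W]
  exact SMaux.finrank_W

end
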